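/- Let ω < 0, 0 < α ≤ 1 and 0 < αγ ≤ β ≤ 1. The map θ ↦ Λ(θ) is injective on (0, απ/2); that is, the curve Ψ = {Λ(θ) : θ ∈ (0, απ/2)} is a simple curve. -/

import Mathlib

open Real Complex Filter Set Topology

/-- The curve parametrization Λ(θ) bounding the stability region. -/
noncomputable def Lam (α β γ ω : ℝ) (θ : ℝ) : ℂ :=
  ((|ω| ^ (β / α) * Real.sin θ ^ (β / α - γ) * Real.sin (α * π / 2) ^ γ *
      Real.sin (α * π / 2 - θ) ^ (-(β / α)) : ℝ) : ℂ) *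
    Complex.exp (Complex.I * ((γ * θ + (β - α * γ) * π / 2 : ℝ) : ℂ))

/-- The characteristic function F(s) = s^(β-αγ) (s^α - ω)^γ (principal branches). -/
noncomputable def Fc (α β γ ω : ℝ) (s : ℂ) : ℂ :=
  s ^ ((β - α * γ : ℝ) : ℂ) * (s ^ ((α : ℝ) : ℂ) - (ω : ℂ)) ^ ((γ : ℝ) : ℂ)

/-- μ(θ) = (|ω| sin θ / sin(απ/2 - θ))^(1/α). -/
noncomputable def muP (α ω : ℝ) (θ : ℝ) : ℝ :=
  (|ω| * Real.sin θ / Real.sin (α * π / 2 - θ)) ^ (1 / α)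

/-- ρ(θ) = |ω| sin(απ/2) / sin(απ/2 - θ). -/
noncomputable def rhoP (α ω : ℝ) (θ : ℝ) : ℝ :=
  |ω| * Real.sin (α * π / 2) / Real.sin (α * π / 2 - θ)

lemma lam_r_pos (α β γ ω θ : ℝ) (hω : ω < 0) (hα0 : 0 < α) (hα1 : α ≤ 1)
    (h0 : 0 < θ) (h1 : θ < α * π / 2) :
    0 < |ω| ^ (β / α) * Real.sin θ ^ (β / α - γ) * Real.sin (α * π / 2) ^ γ *
      Real.sin (α * π / 2 - θ) ^ (-(β / α)) := by
  have hπ := Real.pi_pos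
  have hω' : 0 < |ω| := abs_pos.mpr hω.ne
  have hs1 : 0 < Real.sin θ := Real.sin_pos_of_pos_of_lt_pi h0 (by nlinarith)
  have hs2 : 0 < Real.sin (α * π / 2) :=
    Real.sin_pos_of_pos_of_lt_pi (by positivity) (by nlinarith)
  have hs3 : 0 < Real.sin (α * π / 2 - θ) :=
    Real.sin_pos_of_pos_of_lt_pi (by linarith) (by nlinarith)
  exact mul_pos (mul_pos (mul_pos (Real.rpow_pos_of_pos hω' _)
    (Real.rpow_pos_of_pos hs1 _)) (Real.rpow_pos_of_pos hs2 _)) (Real.rpow_pos_of_pos hs3 _)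

theorem lam_injOn (α β γ ω : ℝ) (hω : ω < 0) (hα0 : 0 < α) (hα1 : α ≤ 1)
    (hαγ : 0 < α * γ) (hβ0 : α * γ ≤ β) (hβ1 : β ≤ 1) :
    Set.InjOn (Lam α β γ ω) (Set.Ioo 0 (α * π / 2)) := by
  have hπ := Real.pi_pos
  have hγ : 0 < γ := by nlinarith
  rintro x ⟨hx0, hx1⟩ y ⟨hy0, hy1⟩ h
  set rX := |ω| ^ (β / α) * Real.sin x ^ (β / α - γ) * Real.sin (α * π / 2) ^ γ *
      Real.sin (α * π / 2 - x) ^ (-(β / α)) with hrXdef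
  set rY := |ω| ^ (β / α) * Real.sin y ^ (β / α - γ) * Real.sin (α * π / 2) ^ γ *
      Real.sin (α * π / 2 - y) ^ (-(β / α)) with hrYdef
  have hrX : 0 < rX := lam_r_pos α β γ ω x hω hα0 hα1 hx0 hx1
  have hrY : 0 < rY := lam_r_pos α β γ ω y hω hα0 hα1 hy0 hy1
  set φX : ℝ := γ * x + (β - α * γ) * π / 2 with hφX
  set φY : ℝ := γ * y + (β - α * γ) * π / 2 with hφY
  have habs : rX = rY := by
    have := congrArg (‖·‖) h
    simpa [Lam, norm_mul, Complex.norm_real, Real.norm_eq_abs, Complex.norm_exp, abs_of_pos hrX,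
      abs_of_pos hrY, ← hrXdef, ← hrYdef] using this
  have hexp : Complex.exp (Complex.I * (φX : ℂ)) = Complex.exp (Complex.I * (φY : ℂ)) := by
    have h' : (rY : ℂ) * Complex.exp (Complex.I * (φX : ℂ)) =
        (rY : ℂ) * Complex.exp (Complex.I * (φY : ℂ)) := by
      have hh := h
      rw [Lam, Lam] at hh
      rw [← hrXdef, ← hrYdef, ← hφX, ← hφY, habs] at hh
      exact hh
    exact mul_left_cancel₀ (by exact_mod_cast hrY.ne') h'
  obtain ⟨n, hn⟩ := Complex.exp_eq_exp_iff_exists_int.mp hexp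
  have him : φX = φY + n * (2 * π) := by
    have := congrArg Complex.im hn
    simpa [Complex.mul_im, Complex.mul_re] using this
  have hn0 : n = 0 := by
    have hb : |φX - φY| < 2 * π := by
      rw [hφX, hφY]
      rw [abs_lt]
      constructor <;> nlinarith
    rw [him] at hb
    have : |(n : ℝ)| < 1 := by
      have h2 : (0:ℝ) < 2 * π := by positivity
      have : |(n:ℝ)| * (2 * π) < 2 * π := by
        calc |(n:ℝ)| * (2*π) = |(n:ℝ) * (2*π)| := by rw [abs_mul, abs_of_pos h2]
        _ = |φY + n * (2*π) - φY| := by ring_nf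
        _ < 2 * π := hb
      nlinarith
    have : (-1 : ℝ) < n ∧ (n : ℝ) < 1 := abs_lt.mp this
    exact_mod_cast by
      have h1 : (-1 : ℤ) < n := by exact_mod_cast this.1
      have h2 : (n : ℤ) < 1 := by exact_mod_cast this.2
      omega
  rw [hn0] at him
  simp at him
  have : γ * x = γ * y := by rw [hφX, hφY] at him; linarith
  exact mul_left_cancel₀ hγ.ne' this
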